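/- Let I and J be index sets, let a be a dual weight matrix on I and b a dual weight matrix on J. Let r ∈ ℕ ∪ {∞}, α₂ : {0,…,r} → ℕ and α₃ : {0,…,r} → [1,∞) (where {0,…,∞} means ℕ). Let D = {c : I → ℂ : Σ_{i∈I} |c_i|·a_{M,i} < ∞ for some M ∈ ℕ with M ≤ r} (a vector subspace of ℂ^I, since a_{M+1,i} ≤ a_{M,i}), and let T : D → (J → ℂ) be a linear map such that for every M ∈ ℕ with M ≤ r and every c ∈ D with Σ_{i∈I} |c_i|·a_{M,i} < ∞ one has sup_{j∈J} b_{α₂(M),j}·|T(c)(j)| ≤ α₃(M)·Σ_{i∈I} |c_i|·a_{M,i}. For i ∈ I let e_i ∈ D be the indicator function of {i} and set T_{i,j} = T(e_i)(j). Then: (a) |T_{i,j}| ≤ inf_{M∈ℕ, M ≤ r} α₃(M)·a_{M,i}/b_{α₂(M),j} for all (i,j) ∈ I×J; (b) for every c ∈ D and every j ∈ J, the family (c_i·T_{i,j})_{i∈I} is absolutely summable and T(c)(j) = Σ_{i∈I} c_i·T_{i,j}. -/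

import Mathlib

/-- Let `a`, `b` be dual weight matrices on index sets `I`, `J`, let `r ∈ ℕ ∪ {∞}`,
`α₂ : {0,…,r} → ℕ`, `α₃ : {0,…,r} → [1,∞)`. Let
`D = {c : I → ℂ | Σ_i |c_i|·a_{M,i} < ∞ for some M ≤ r}` and let `T : D → (J → ℂ)` be a
linear map satisfying, for every `M ≤ r` and `c ∈ D` with `Σ_i |c_i|·a_{M,i} < ∞`,
`sup_j b_{α₂(M),j}·|T(c)(j)| ≤ α₃(M)·Σ_i |c_i|·a_{M,i}`. With `e_i` the indicator of `{i}`
and `T_{i,j} = T(e_i)(j)`, we have: (a) `|T_{i,j}| ≤ α₃(M)·a_{M,i}/b_{α₂(M),j}` for all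
`M ≤ r`; (b) for every `c ∈ D` and `j ∈ J`, `(c_i·T_{i,j})_i` is absolutely summable and
`T(c)(j) = Σ_i c_i·T_{i,j}`. -/
theorem matrix_representation_of_bounded_operator
    {I J : Type*} [Countable I] [Infinite I] [Countable J] [Infinite J]
    (a : ℕ → I → ℝ) (ha_pos : ∀ N i, 0 < a N i) (ha_anti : ∀ N i, a (N + 1) i ≤ a N i)
    (b : ℕ → J → ℝ) (hb_pos : ∀ N j, 0 < b N j) (hb_anti : ∀ N j, b (N + 1) j ≤ b N j)
    (r : ℕ∞) (α₂ : ℕ → ℕ) (α₃ : ℕ → ℝ)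
    (hα₃ : ∀ M : ℕ, (M : ℕ∞) ≤ r → 1 ≤ α₃ M)
    (D : Set (I → ℂ))
    (hD : D = {c | ∃ M : ℕ, (M : ℕ∞) ≤ r ∧ Summable fun i => ‖c i‖ * a M i})
    (T : (I → ℂ) → (J → ℂ))
    (hT_add : ∀ c c', c ∈ D → c' ∈ D → T (c + c') = T c + T c')
    (hT_smul : ∀ (s : ℂ) (c), c ∈ D → T (s • c) = s • T c)
    (hT_bound : ∀ M : ℕ, (M : ℕ∞) ≤ r → ∀ c ∈ D, (Summable fun i => ‖c i‖ * a M i) →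
      ∀ j, b (α₂ M) j * ‖T c j‖ ≤ α₃ M * ∑' i, ‖c i‖ * a M i)
    (e : I → (I → ℂ))
    (he : ∀ i, e i = Set.indicator {i} (fun _ => 1)) :
    (∀ (i : I) (j : J) (M : ℕ), (M : ℕ∞) ≤ r →
      ‖T (e i) j‖ ≤ α₃ M * a M i / b (α₂ M) j) ∧
    ∀ c ∈ D, ∀ j, (Summable fun i => ‖c i * T (e i) j‖) ∧
      T c j = ∑' i, c i * T (e i) j := by
  classical

  -- preliminary facts
  have haM : ∀ M M' : ℕ, M ≤ M' → ∀ i, a M' i ≤ a M i := by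
    intro M M' h i
    exact antitone_nat_of_succ_le (f := fun N => a N i) (fun n => ha_anti n i) h
  have he' : ∀ i i', e i i' = if i' = i then 1 else 0 := by
    intro i i'
    rw [he]
    by_cases h : i' = i <;> simp [Set.indicator, h]
  -- e i ∈ D with summability at every level M
  have he_sum : ∀ (i : I) (M : ℕ), Summable fun i' => ‖e i i'‖ * a M i' := by
    intro i M
    apply summable_of_ne_finset_zero (s := {i})
    intro i' hi'
    simp only [Finset.mem_singleton] at hi'
    rw [he' i i', if_neg hi']
    simp
  have he_tsum : ∀ (i : I) (M : ℕ), (∑' i', ‖e i i'‖ * a M i') = a M i := by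
    intro i M
    rw [tsum_eq_single i]
    · rw [he' i i, if_pos rfl]; simp
    · intro i' hi'
      rw [he' i i', if_neg hi']; simp
  have he_mem : ∀ i, e i ∈ D := by
    intro i
    rw [hD]
    exact ⟨0, zero_le, he_sum i 0⟩
  -- part (a)
  have parta : ∀ (i : I) (j : J) (M : ℕ), (M : ℕ∞) ≤ r →
      ‖T (e i) j‖ ≤ α₃ M * a M i / b (α₂ M) j := by
    intro i j M hM
    have h := hT_bound M hM (e i) (he_mem i) (he_sum i M) j
    rw [he_tsum i M] at h
    rw [le_div_iff₀ (hb_pos (α₂ M) j)]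
    linarith [h]
  refine ⟨parta, ?_⟩
  -- D closed under addition
  have hD_add : ∀ c c', c ∈ D → c' ∈ D → c + c' ∈ D := by
    intro c c' hc hc'
    rw [hD] at hc hc' ⊢
    obtain ⟨M, hM, hs⟩ := hc
    obtain ⟨M', hM', hs'⟩ := hc'
    refine ⟨max M M', ?_, ?_⟩
    · rcases le_total M M' with h | h
      · rw [max_eq_right h]; exact hM'
      · rw [max_eq_left h]; exact hM
    · refine Summable.of_nonneg_of_le
        (fun i => mul_nonneg (norm_nonneg _) (ha_pos _ i).le) ?_ (hs.add hs')
      intro i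
      have h1 : a (max M M') i ≤ a M i := haM M _ (le_max_left _ _) i
      have h2 : a (max M M') i ≤ a M' i := haM M' _ (le_max_right _ _) i
      have h3 : ‖(c + c') i‖ ≤ ‖c i‖ + ‖c' i‖ := norm_add_le _ _
      have hcc : (0:ℝ) ≤ ‖c i‖ := norm_nonneg _
      have hcc' : (0:ℝ) ≤ ‖c' i‖ := norm_nonneg _
      calc ‖(c + c') i‖ * a (max M M') i ≤ (‖c i‖ + ‖c' i‖) * a (max M M') i := by
            apply mul_le_mul_of_nonneg_right h3 (le_of_lt (ha_pos _ i))
        _ = ‖c i‖ * a (max M M') i + ‖c' i‖ * a (max M M') i := by ring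
        _ ≤ ‖c i‖ * a M i + ‖c' i‖ * a M' i := by
            apply add_le_add (mul_le_mul_of_nonneg_left h1 hcc)
              (mul_le_mul_of_nonneg_left h2 hcc')
  have hD_zero : (0 : I → ℂ) ∈ D := by
    rw [hD]
    exact ⟨0, zero_le, by simpa using summable_zero⟩
  have hT_zero : T 0 = 0 := by
    have := hT_smul 0 0 hD_zero
    simpa using this
  have hD_smul : ∀ (s : ℂ) c, c ∈ D → s • c ∈ D := by
    intro s c hc
    rw [hD] at hc ⊢
    obtain ⟨M, hM, hs⟩ := hc
    refine ⟨M, hM, ?_⟩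
    have : (fun i => ‖(s • c) i‖ * a M i) = fun i => ‖s‖ * (‖c i‖ * a M i) := by
      funext i; simp [norm_smul]; ring
    rw [this]
    exact hs.mul_left _
  -- finite linear combinations
  have hfin : ∀ (c : I → ℂ) (s : Finset I),
      (∑ i ∈ s, c i • e i) ∈ D ∧ T (∑ i ∈ s, c i • e i) = ∑ i ∈ s, c i • T (e i) := by
    intro c s
    induction s using Finset.induction_on with
    | empty => simpa using ⟨hD_zero, hT_zero⟩
    | insert i s hnot ih =>
      rw [Finset.sum_insert hnot, Finset.sum_insert hnot]
      constructor
      · exact hD_add _ _ (hD_smul _ _ (he_mem i)) ih.1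
      · rw [hT_add _ _ (hD_smul _ _ (he_mem i)) ih.1, hT_smul _ _ (he_mem i), ih.2]
  -- part (b)
  intro c hc j
  rw [hD] at hc
  obtain ⟨M, hM, hsum⟩ := hc
  set β := b (α₂ M) j with hβ
  have hβpos : 0 < β := hb_pos _ _
  -- summability
  have hsummab : Summable fun i => ‖c i * T (e i) j‖ := by
    refine Summable.of_nonneg_of_le (fun i => norm_nonneg _) ?_
      (hsum.mul_left (α₃ M / β))
    intro i
    rw [norm_mul]
    calc ‖c i‖ * ‖T (e i) j‖ ≤ ‖c i‖ * (α₃ M * a M i / β) := by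
          apply mul_le_mul_of_nonneg_left (parta i j M hM) (norm_nonneg _)
      _ = (α₃ M / β) * (‖c i‖ * a M i) := by ring
  refine ⟨hsummab, ?_⟩
  have hg : Summable fun i => c i * T (e i) j := hsummab.of_norm
  -- partial sums tend to T c j
  have key : Filter.Tendsto (fun s : Finset I => ∑ i ∈ s, c i * T (e i) j)
      Filter.atTop (nhds (T c j)) := by
    have hP : Filter.Tendsto (fun s : Finset I => ∑ i ∈ s, ‖c i‖ * a M i)
        Filter.atTop (nhds (∑' i, ‖c i‖ * a M i)) := hsum.hasSum
    have hbound : ∀ s : Finset I,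
        ‖T c j - ∑ i ∈ s, c i * T (e i) j‖ ≤
          (α₃ M / β) * ((∑' i, ‖c i‖ * a M i) - ∑ i ∈ s, ‖c i‖ * a M i) := by
      intro s
      set p := ∑ i ∈ s, c i • e i with hp
      have hrem_eq : ∀ i, (c - p) i = Set.indicator (↑s : Set I)ᶜ c i := by
        intro i
        have hpe : p i = ∑ i' ∈ s, c i' * e i' i := by
          simp [hp, Finset.sum_apply]
        have : p i = if i ∈ s then c i else 0 := by
          rw [hpe]
          rw [Finset.sum_congr rfl (fun i' _ => by rw [he' i' i])]
          simp [Finset.sum_ite_eq' s i (fun i' => c i')]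
        by_cases hi : i ∈ s <;> simp [this, hi, Set.indicator]
      have hrem_norm : ∀ i, ‖(c - p) i‖ * a M i =
          Set.indicator (↑s : Set I)ᶜ (fun i => ‖c i‖ * a M i) i := by
        intro i
        rw [hrem_eq i]
        by_cases hi : i ∈ s <;> simp [Set.indicator, hi]
      have hrem_sum : Summable fun i => ‖(c - p) i‖ * a M i := by
        refine Summable.of_nonneg_of_le
          (fun i => mul_nonneg (norm_nonneg _) (ha_pos _ i).le) ?_ hsum
        intro i
        rw [hrem_norm i]
        by_cases hi : i ∈ s <;> simp [Set.indicator, hi]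
        exact mul_nonneg (norm_nonneg _) (ha_pos _ i).le
      have hrem_tsum : (∑' i, ‖(c - p) i‖ * a M i) =
          (∑' i, ‖c i‖ * a M i) - ∑ i ∈ s, ‖c i‖ * a M i := by
        have h1 : (∑' i, ‖(c - p) i‖ * a M i)
            = ∑' (i : ((↑s : Set I)ᶜ : Set I)), ‖c i‖ * a M i := by
          rw [tsum_congr hrem_norm, ← tsum_subtype]
        have h2 := Summable.sum_add_tsum_compl (s := s) hsum
        rw [h1]
        linarith [h2]
      have hrem_mem : c - p ∈ D := by
        rw [hD]; exact ⟨M, hM, hrem_sum⟩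
      have hTc : T c j - ∑ i ∈ s, c i * T (e i) j = T (c - p) j := by
        have hsplit : c = (c - p) + p := by ring
        have hpD : p ∈ D := (hfin c s).1
        have := hT_add (c - p) p hrem_mem hpD
        rw [← hsplit] at this
        have hTp : T p j = ∑ i ∈ s, c i * T (e i) j := by
          rw [(hfin c s).2]
          simp [Finset.sum_apply]
        have := congrFun this j
        simp only [Pi.add_apply] at this
        rw [this, hTp]
        ring
      rw [hTc]
      have hb := hT_bound M hM (c - p) hrem_mem hrem_sum j
      rw [hrem_tsum] at hb
      have : ‖T (c - p) j‖ ≤ α₃ M * ((∑' i, ‖c i‖ * a M i) - ∑ i ∈ s, ‖c i‖ * a M i) / β := by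
        rw [le_div_iff₀ hβpos]
        linarith [hb]
      calc ‖T (c - p) j‖ ≤ α₃ M * ((∑' i, ‖c i‖ * a M i) - ∑ i ∈ s, ‖c i‖ * a M i) / β := this
        _ = (α₃ M / β) * ((∑' i, ‖c i‖ * a M i) - ∑ i ∈ s, ‖c i‖ * a M i) := by ring
    have htail : Filter.Tendsto
        (fun s : Finset I => (α₃ M / β) * ((∑' i, ‖c i‖ * a M i) - ∑ i ∈ s, ‖c i‖ * a M i))
        Filter.atTop (nhds 0) := by
      have : Filter.Tendsto
          (fun s : Finset I => (∑' i, ‖c i‖ * a M i) - ∑ i ∈ s, ‖c i‖ * a M i)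
          Filter.atTop (nhds 0) := by
        have := (tendsto_const_nhds (x := ∑' i, ‖c i‖ * a M i)
          (f := Filter.atTop (α := Finset I))).sub hP
        simpa using this
      simpa using this.const_mul (α₃ M / β)
    have hnorm0 : Filter.Tendsto
        (fun s : Finset I => ‖T c j - ∑ i ∈ s, c i * T (e i) j‖)
        Filter.atTop (nhds 0) :=
      squeeze_zero (fun s => norm_nonneg _) hbound htail
    refine tendsto_iff_norm_sub_tendsto_zero.mpr ?_
    have heq : (fun s : Finset I => ‖(∑ i ∈ s, c i * T (e i) j) - T c j‖)
        = fun s : Finset I => ‖T c j - ∑ i ∈ s, c i * T (e i) j‖ := by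
      funext s; rw [norm_sub_rev]
    rw [heq]
    exact hnorm0
  have hhs : HasSum (fun i => c i * T (e i) j) (T c j) := key
  exact hhs.tsum_eq.symm
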